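/- Among all connected graphs on n vertices (n >= 3) with unit edge resistances in which the edge ab is not a cut-edge, the quantity R'_{ab} - R_{ab} attains its minimum value 4/(n(n-2)) for the complete graph K_n. -/

import Mathlib

open Finset

section Defs

variable {V : Type*} [Fintype V]

/-- Total conductance at a vertex. -/
noncomputable def condAt (c : V → V → ℝ) (x : V) : ℝ := ∑ y, c x y

/-- Transition probabilities of the random walk induced by conductances `c`. -/
noncomputable def step (c : V → V → ℝ) (x y : V) : ℝ := c x y / condAt c x

open scoped Classical in
/-- `surv P b n a` is the probability that the walk with transition matrix `P`
started at `a` has not visited `b` by time `n`. -/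
noncomputable def surv (P : V → V → ℝ) (b : V) : ℕ → V → ℝ
  | 0 => fun a => if a = b then 0 else 1
  | n + 1 => fun a => if a = b then 0 else ∑ y, P a y * surv P b n y

/-- Expected hitting time of `b` starting from `a`, as the sum over `n` of the
survival probabilities `P(T_b > n)`. -/
noncomputable def hitTime (P : V → V → ℝ) (a b : V) : ℝ := ∑' n, surv P b n a

/-- Expected return time to `z` : one step plus the expected hitting time of `z`
from the position after the first step. -/
noncomputable def returnTime (P : V → V → ℝ) (z : V) : ℝ :=
  1 + ∑ y, P z y * hitTime P y z

/-- Dirichlet energy of a potential `f` for conductances `c`. -/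
noncomputable def energy (c : V → V → ℝ) (f : V → ℝ) : ℝ :=
  (1 / 2) * ∑ x, ∑ y, c x y * (f x - f y) ^ 2

/-- Effective resistance between `a` and `b` (Dirichlet principle): the
reciprocal of the minimal Dirichlet energy among potentials with
`f a = 1`, `f b = 0`. -/
noncomputable def effRes (c : V → V → ℝ) (a b : V) : ℝ :=
  1 / sInf {E : ℝ | ∃ f : V → ℝ, f a = 1 ∧ f b = 0 ∧ E = energy c f}

end Defs

open scoped Classical in
/-- Unit conductances on the edges of a simple graph. -/
noncomputable def gw {V : Type*} (G : SimpleGraph V) (x y : V) : ℝ :=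
  if G.Adj x y then 1 else 0

/-- Number of edges of a simple graph. -/
noncomputable def numEdges {V : Type*} (G : SimpleGraph V) : ℕ := G.edgeSet.ncard

namespace EffResAux

variable {V : Type*} [Fintype V]

lemma gw_nonneg (G : SimpleGraph V) (x y : V) : 0 ≤ gw G x y := by
  unfold gw; split <;> norm_num

lemma gw_le_one (G : SimpleGraph V) (x y : V) : gw G x y ≤ 1 := by
  unfold gw; split <;> norm_num

lemma gw_of_adj {G : SimpleGraph V} {x y : V} (h : G.Adj x y) : gw G x y = 1 := by
  simp [gw, h]

lemma gw_of_not_adj {G : SimpleGraph V} {x y : V} (h : ¬ G.Adj x y) : gw G x y = 0 := by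
  simp [gw, h]

noncomputable def resSet (c : V → V → ℝ) (a b : V) : Set ℝ :=
  {E : ℝ | ∃ f : V → ℝ, f a = 1 ∧ f b = 0 ∧ E = energy c f}

lemma effRes_eq (c : V → V → ℝ) (a b : V) : effRes c a b = 1 / sInf (resSet c a b) := rfl

lemma energy_nonneg (G : SimpleGraph V) (f : V → ℝ) : 0 ≤ energy (gw G) f := by
  unfold energy
  apply mul_nonneg (by norm_num)
  exact Finset.sum_nonneg fun x _ => Finset.sum_nonneg fun y _ =>
    mul_nonneg (gw_nonneg _ _ _) (sq_nonneg _)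

lemma resSet_nonempty {a b : V} (hab : a ≠ b) (G : SimpleGraph V) :
    (resSet (gw G) a b).Nonempty := by
  classical
  exact ⟨energy (gw G) (fun x => if x = a then 1 else 0),
    fun x => if x = a then 1 else 0, by simp, by simp [hab.symm], rfl⟩

lemma resSet_bddBelow (G : SimpleGraph V) (a b : V) : BddBelow (resSet (gw G) a b) :=
  ⟨0, fun E ⟨f, _, _, hE⟩ => hE ▸ energy_nonneg G f⟩

lemma edge_le_energy {G : SimpleGraph V} (f : V → ℝ) {x y : V} (hxy : G.Adj x y) :
    (f x - f y) ^ 2 ≤ energy (gw G) f := by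
  classical
  have hne : x ≠ y := hxy.ne
  set g : V → ℝ := fun z => ∑ w, gw G z w * (f z - f w) ^ 2 with hg
  have hgnn : ∀ z, 0 ≤ g z := fun z =>
    Finset.sum_nonneg fun w _ => mul_nonneg (gw_nonneg _ _ _) (sq_nonneg _)
  have h2 : g x + g y ≤ ∑ z, g z := by
    have := Finset.sum_le_sum_of_subset_of_nonneg (f := g)
      (Finset.subset_univ ({x, y} : Finset V)) (fun i _ _ => hgnn i)
    rwa [Finset.sum_pair hne] at this
  have h3 : gw G x y * (f x - f y) ^ 2 ≤ g x :=
    Finset.single_le_sum (f := fun w => gw G x w * (f x - f w) ^ 2)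
      (fun w _ => mul_nonneg (gw_nonneg _ _ _) (sq_nonneg _)) (Finset.mem_univ y)
  have h4 : gw G y x * (f y - f x) ^ 2 ≤ g y :=
    Finset.single_le_sum (f := fun w => gw G y w * (f y - f w) ^ 2)
      (fun w _ => mul_nonneg (gw_nonneg _ _ _) (sq_nonneg _)) (Finset.mem_univ x)
  rw [gw_of_adj hxy] at h3
  rw [gw_of_adj hxy.symm] at h4
  have hsq : (f y - f x) ^ 2 = (f x - f y) ^ 2 := by ring
  rw [hsq] at h4
  unfold energy
  rw [← hg]
  linarith

lemma exists_dart {G : SimpleGraph V} (f : V → ℝ) :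
    ∀ {x y : V} (w : G.Walk x y), x = y ∨
      ∃ d ∈ w.darts, |f x - f y| ≤ (w.length : ℝ) * |f d.toProd.1 - f d.toProd.2| := by
  intro x y w
  induction w with
  | nil => exact Or.inl rfl
  | @cons u v z hadj p ih =>
    right
    rcases ih with rfl | ⟨d, hd, hdle⟩
    · refine ⟨⟨(u, v), hadj⟩, by simp [SimpleGraph.Walk.darts_cons], ?_⟩
      simp only [SimpleGraph.Walk.length_cons]
      push_cast
      nlinarith [abs_nonneg (f u - f v), (Nat.cast_nonneg p.length : (0:ℝ) ≤ p.length)]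
    · have htri : |f u - f z| ≤ |f u - f v| + |f v - f z| := abs_sub_le _ _ _
      rcases le_total (|f d.toProd.1 - f d.toProd.2|) (|f u - f v|) with hc | hc
      · refine ⟨⟨(u, v), hadj⟩, by simp [SimpleGraph.Walk.darts_cons], ?_⟩
        simp only [SimpleGraph.Walk.length_cons]
        push_cast
        have hlen : (0:ℝ) ≤ (p.length : ℝ) := Nat.cast_nonneg _
        nlinarith [abs_nonneg (f u - f v)]
      · refine ⟨d, by simp [SimpleGraph.Walk.darts_cons, hd], ?_⟩
        simp only [SimpleGraph.Walk.length_cons]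
        push_cast
        nlinarith [abs_nonneg (f d.toProd.1 - f d.toProd.2)]

lemma csInf_pos {G : SimpleGraph V} (hG : G.Connected) {a b : V} (hab : a ≠ b) :
    0 < sInf (resSet (gw G) a b) := by
  classical
  obtain ⟨w⟩ := hG.preconnected a b
  have hlen : 0 < w.length := by
    rcases Nat.eq_zero_or_pos w.length with h | h
    · exact absurd (SimpleGraph.Walk.eq_of_length_eq_zero h) hab
    · exact h
  have hlenR : (0:ℝ) < (w.length : ℝ) := by exact_mod_cast hlen
  have key : ∀ E ∈ resSet (gw G) a b, 1 / (w.length : ℝ) ^ 2 ≤ E := by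
    rintro E ⟨f, hfa, hfb, rfl⟩
    rcases exists_dart f w with rfl | ⟨d, _, hdle⟩
    · exact absurd rfl hab
    · have h1 : |f a - f b| = 1 := by rw [hfa, hfb]; norm_num
      rw [h1] at hdle
      have hd2 : 1 / (w.length : ℝ) ≤ |f d.toProd.1 - f d.toProd.2| := by
        rw [div_le_iff₀ hlenR]
        linarith [hdle]
      have hd3 : 1 / (w.length : ℝ) ^ 2 ≤ (f d.toProd.1 - f d.toProd.2) ^ 2 := by
        have h1l : (0:ℝ) < 1 / (w.length : ℝ) := by positivity
        have := sq_le_sq' (by linarith [abs_nonneg (f d.toProd.1 - f d.toProd.2)] : -(|f d.toProd.1 - f d.toProd.2|) ≤ 1 / (w.length : ℝ)) hd2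
        calc 1 / (w.length : ℝ) ^ 2 = (1 / (w.length : ℝ)) ^ 2 := by ring
        _ ≤ |f d.toProd.1 - f d.toProd.2| ^ 2 := this
        _ = (f d.toProd.1 - f d.toProd.2) ^ 2 := sq_abs _
      exact le_trans hd3 (edge_le_energy f d.adj)
  have := le_csInf (resSet_nonempty hab G) key
  have hpos : (0:ℝ) < 1 / (w.length : ℝ) ^ 2 := by positivity
  linarith

lemma energy_delete {G : SimpleGraph V} {a b : V} (hab : G.Adj a b) (f : V → ℝ) :
    energy (gw G) f = energy (gw (G.deleteEdges {s(a, b)})) f + (f a - f b) ^ 2 := by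
  classical
  set G' := G.deleteEdges {s(a, b)} with hG'
  set r := (f a - f b) ^ 2 with hr
  have key : ∀ x y : V, gw G x y * (f x - f y) ^ 2 =
      gw G' x y * (f x - f y) ^ 2 +
      ((if x = a then (if y = b then r else 0) else 0) +
       (if x = b then (if y = a then r else 0) else 0)) := by
    intro x y
    by_cases h1 : x = a ∧ y = b
    · obtain ⟨rfl, rfl⟩ := h1
      have hG'n : ¬ G'.Adj x y := by simp [hG', SimpleGraph.deleteEdges_adj]
      rw [gw_of_adj hab, gw_of_not_adj hG'n]
      simp [hab.ne, hr]
    · by_cases h2 : x = b ∧ y = a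
      · obtain ⟨rfl, rfl⟩ := h2
        have hG'n : ¬ G'.Adj x y := by
          simp [hG', SimpleGraph.deleteEdges_adj, Sym2.eq_iff]
        rw [gw_of_adj hab.symm, gw_of_not_adj hG'n]
        have : (f x - f y) ^ 2 = r := by rw [hr]; ring
        simp [hab.ne', this]
      · have hsy : s(x, y) ≠ s(a, b) := by
          simp only [ne_eq, Sym2.eq_iff]; tauto
        have hAdj : G'.Adj x y ↔ G.Adj x y := by
          rw [hG', SimpleGraph.deleteEdges_adj]
          simp [hsy]
        have hgg : gw G' x y = gw G x y := by
          unfold gw; simp only [hAdj]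
        rw [hgg]
        have e1 : (if x = a then (if y = b then r else 0) else 0) = 0 := by
          split <;> [skip; rfl]; split <;> [exact absurd ⟨by assumption, by assumption⟩ h1; rfl]
        have e2 : (if x = b then (if y = a then r else 0) else 0) = 0 := by
          split <;> [skip; rfl]; split <;> [exact absurd ⟨by assumption, by assumption⟩ h2; rfl]
        rw [e1, e2]; ring
  unfold energy
  have hsum : ∑ x, ∑ y, gw G x y * (f x - f y) ^ 2 =
      (∑ x, ∑ y, gw G' x y * (f x - f y) ^ 2) + 2 * r := by
    calc ∑ x, ∑ y, gw G x y * (f x - f y) ^ 2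
        = ∑ x, ∑ y, (gw G' x y * (f x - f y) ^ 2 +
            ((if x = a then (if y = b then r else 0) else 0) +
             (if x = b then (if y = a then r else 0) else 0))) :=
          Finset.sum_congr rfl fun x _ => Finset.sum_congr rfl fun y _ => key x y
      _ = (∑ x, ∑ y, gw G' x y * (f x - f y) ^ 2) + 2 * r := by
          simp [Finset.sum_add_distrib, Finset.sum_ite_eq, Finset.sum_ite_eq']
          ring
  rw [hsum]
  ring

lemma sInf_delete {G : SimpleGraph V} {a b : V} (hab : G.Adj a b) :
    sInf (resSet (gw G) a b) = sInf (resSet (gw (G.deleteEdges {s(a, b)})) a b) + 1 := by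
  classical
  set G' := G.deleteEdges {s(a, b)} with hG'
  have hne : a ≠ b := hab.ne
  have hmem : ∀ f : V → ℝ, f a = 1 → f b = 0 →
      energy (gw G) f = energy (gw G') f + 1 := by
    intro f hfa hfb
    rw [energy_delete hab f, hfa, hfb]; ring
  apply le_antisymm
  · have h2 : ∀ E ∈ resSet (gw G') a b, sInf (resSet (gw G) a b) - 1 ≤ E := by
      rintro E ⟨f, hfa, hfb, rfl⟩
      have h1 : sInf (resSet (gw G) a b) ≤ energy (gw G) f :=
        csInf_le (resSet_bddBelow G a b) ⟨f, hfa, hfb, rfl⟩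
      rw [hmem f hfa hfb] at h1; linarith
    have := le_csInf (resSet_nonempty hne G') h2
    linarith
  · have h2 : ∀ E ∈ resSet (gw G) a b, sInf (resSet (gw G') a b) + 1 ≤ E := by
      rintro E ⟨f, hfa, hfb, rfl⟩
      have h1 : sInf (resSet (gw G') a b) ≤ energy (gw G') f :=
        csInf_le (resSet_bddBelow G' a b) ⟨f, hfa, hfb, rfl⟩
      rw [hmem f hfa hfb]; linarith
    exact le_csInf (resSet_nonempty hne G) h2

end EffResAux

namespace EffResAux

variable {V : Type*} [Fintype V]

open scoped Classical in
noncomputable def fstar (a b : V) : V → ℝ := fun x =>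
  if x = a then 1 else if x = b then 0 else 1/2

lemma fstar_a (a b : V) : fstar a b a = 1 := by simp [fstar]

lemma fstar_b {a b : V} (h : a ≠ b) : fstar a b b = 0 := by
  simp [fstar, Ne.symm h]

lemma fstar_other {a b x : V} (h1 : x ≠ a) (h2 : x ≠ b) : fstar a b x = 1/2 := by
  simp [fstar, h1, h2]

lemma energy_fstar_le (H : SimpleGraph V) {a b : V} (hab : a ≠ b) (hnadj : ¬ H.Adj a b) :
    energy (gw H) (fstar a b) ≤ ((Fintype.card V : ℝ) - 2) / 2 := by
  classical
  set p : V → ℝ := fun x => if x = a ∨ x = b then 1 else 0 with hp'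
  set q : V → ℝ := fun x => if x = a ∨ x = b then 0 else 1/4 with hq'
  have hterm : ∀ x y : V, gw H x y * (fstar a b x - fstar a b y) ^ 2 ≤
      p x * q y + q x * p y := by
    intro x y
    by_cases hx : x = a ∨ x = b <;> by_cases hy : y = a ∨ y = b
    · have hRHS : p x * q y + q x * p y = 0 := by simp [hp', hq', hx, hy]
      rw [hRHS]
      rcases hx with rfl | rfl <;> rcases hy with rfl | rfl
      · simp
      · rw [gw_of_not_adj hnadj]; simp
      · rw [gw_of_not_adj (fun h => hnadj h.symm)]; simp
      · simp
    · push_neg at hy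
      have hfy : fstar a b y = 1/2 := fstar_other hy.1 hy.2
      have hRHS : p x * q y + q x * p y = 1/4 := by
        simp [hp', hq', hx, hy.1, hy.2]
      have hdiff : (fstar a b x - fstar a b y) ^ 2 = 1/4 := by
        rw [hfy]
        rcases hx with rfl | rfl
        · rw [fstar_a]; norm_num
        · rw [fstar_b hab]; norm_num
      rw [hRHS, hdiff]
      nlinarith [gw_le_one H x y, gw_nonneg H x y]
    · push_neg at hx
      have hfx : fstar a b x = 1/2 := fstar_other hx.1 hx.2
      have hRHS : p x * q y + q x * p y = 1/4 := by
        simp [hp', hq', hy, hx.1, hx.2]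
      have hdiff : (fstar a b x - fstar a b y) ^ 2 = 1/4 := by
        rw [hfx]
        rcases hy with rfl | rfl
        · rw [fstar_a]; norm_num
        · rw [fstar_b hab]; norm_num
      rw [hRHS, hdiff]
      nlinarith [gw_le_one H x y, gw_nonneg H x y]
    · push_neg at hx; push_neg at hy
      have hfx : fstar a b x = 1/2 := fstar_other hx.1 hx.2
      have hfy : fstar a b y = 1/2 := fstar_other hy.1 hy.2
      have hL : gw H x y * (fstar a b x - fstar a b y) ^ 2 = 0 := by
        rw [hfx, hfy]; ring
      rw [hL]
      have hpn : (0:ℝ) ≤ p x := by rw [hp']; dsimp only; split <;> norm_num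
      have hpny : (0:ℝ) ≤ p y := by rw [hp']; dsimp only; split <;> norm_num
      have hqn : (0:ℝ) ≤ q x := by rw [hq']; dsimp only; split <;> norm_num
      have hqny : (0:ℝ) ≤ q y := by rw [hq']; dsimp only; split <;> norm_num
      have := add_nonneg (mul_nonneg hpn hqny) (mul_nonneg hqn hpny)
      linarith
  have hcard2 : 2 ≤ Fintype.card V := Fintype.one_lt_card_iff.mpr ⟨a, b, hab⟩
  have hfab : univ.filter (fun x => x = a ∨ x = b) = ({a, b} : Finset V) := by
    ext z; simp
  have hp2 : ∑ x, p x = 2 := by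
    rw [hp']
    rw [← Finset.sum_filter (fun x => x = a ∨ x = b) (fun _ => (1:ℝ))]
    rw [hfab, Finset.sum_const, Finset.card_pair hab]
    norm_num
  have hq2 : ∑ x, q x = ((Fintype.card V : ℝ) - 2) / 4 := by
    have h1 : ∑ x, q x = ∑ x ∈ univ.filter (fun x => ¬(x = a ∨ x = b)), (1/4 : ℝ) := by
      rw [Finset.sum_filter]
      refine Finset.sum_congr rfl fun x _ => ?_
      by_cases h : x = a ∨ x = b <;> simp [hq', h]
    rw [h1, Finset.sum_const]
    have h2 : univ.filter (fun x => ¬(x = a ∨ x = b)) = univ \ ({a, b} : Finset V) := by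
      rw [Finset.filter_not, hfab]
    rw [h2, Finset.card_sdiff_of_subset (Finset.subset_univ _), Finset.card_pair hab, Finset.card_univ,
      nsmul_eq_mul, Nat.cast_sub hcard2]
    push_cast
    ring
  have hsum : ∑ x, ∑ y, (p x * q y + q x * p y) =
      (∑ x, p x) * (∑ y, q y) + (∑ x, q x) * (∑ y, p y) := by
    rw [Finset.sum_mul_sum, Finset.sum_mul_sum, ← Finset.sum_add_distrib]
    exact Finset.sum_congr rfl fun x _ => Finset.sum_add_distrib
  have hEle : ∑ x, ∑ y, gw H x y * (fstar a b x - fstar a b y) ^ 2 ≤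
      ∑ x, ∑ y, (p x * q y + q x * p y) :=
    Finset.sum_le_sum fun x _ => Finset.sum_le_sum fun y _ => hterm x y
  rw [hsum, hp2, hq2] at hEle
  unfold energy
  nlinarith [hEle]

lemma lower_bound_complete {a b : V} (hab : a ≠ b) (f : V → ℝ)
    (hfa : f a = 1) (hfb : f b = 0) :
    ((Fintype.card V : ℝ) - 2) / 2 ≤
      energy (gw ((⊤ : SimpleGraph V).deleteEdges {s(a, b)})) f := by
  classical
  set G' := (⊤ : SimpleGraph V).deleteEdges {s(a, b)} with hG'
  set t : V → V → ℝ := fun x y => gw G' x y * (f x - f y) ^ 2 with ht'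
  have htnn : ∀ x y, 0 ≤ t x y := fun x y =>
    mul_nonneg (gw_nonneg _ _ _) (sq_nonneg _)
  have hadj : ∀ y : V, y ≠ a → y ≠ b → G'.Adj a y ∧ G'.Adj b y := by
    intro y hy1 hy2
    constructor
    · rw [hG', SimpleGraph.deleteEdges_adj]
      simp [Sym2.eq_iff, Ne.symm hy1, hy2, hab]
    · rw [hG', SimpleGraph.deleteEdges_adj]
      simp [Sym2.eq_iff, Ne.symm hy2, hy1, Ne.symm hab]
  set g : V → ℝ := fun x => ∑ y, t x y with hg'
  set S : Finset V := univ \ ({a, b} : Finset V) with hS'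
  have hcard2 : 2 ≤ Fintype.card V := Fintype.one_lt_card_iff.mpr ⟨a, b, hab⟩
  have hcardS : (S.card : ℝ) = (Fintype.card V : ℝ) - 2 := by
    rw [hS', Finset.card_sdiff_of_subset (Finset.subset_univ _), Finset.card_pair hab, Finset.card_univ]
    push_cast [hcard2]; ring
  have h1 : ∑ x, g x = (∑ x ∈ S, g x) + (g a + g b) := by
    rw [← Finset.sum_pair hab, hS', Finset.sum_sdiff (Finset.subset_univ _)]
  have h2 : ∑ y ∈ S, t a y ≤ g a :=
    Finset.sum_le_sum_of_subset_of_nonneg (Finset.subset_univ _) fun y _ _ => htnn a y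
  have h3 : ∑ y ∈ S, t b y ≤ g b :=
    Finset.sum_le_sum_of_subset_of_nonneg (Finset.subset_univ _) fun y _ _ => htnn b y
  have h4 : ∀ x ∈ S, t x a + t x b ≤ g x := by
    intro x _
    have := Finset.sum_le_sum_of_subset_of_nonneg (f := fun y => t x y)
      (Finset.subset_univ ({a, b} : Finset V)) (fun y _ _ => htnn x y)
    rwa [Finset.sum_pair hab] at this
  have h5 : ∑ x ∈ S, (t x a + t x b) ≤ ∑ x ∈ S, g x := Finset.sum_le_sum h4
  have h6 : ∀ y ∈ S, (1:ℝ) ≤ t a y + t b y + (t y a + t y b) := by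
    intro y hy
    rw [hS', Finset.mem_sdiff] at hy
    simp only [Finset.mem_insert, Finset.mem_singleton] at hy
    push_neg at hy
    obtain ⟨hya, hyb⟩ := hy.2
    obtain ⟨ha', hb'⟩ := hadj y hya hyb
    have e1 : t a y = (1 - f y) ^ 2 := by
      show gw G' a y * (f a - f y) ^ 2 = (1 - f y) ^ 2
      rw [gw_of_adj ha', hfa]; ring
    have e2 : t b y = (f y) ^ 2 := by
      show gw G' b y * (f b - f y) ^ 2 = (f y) ^ 2
      rw [gw_of_adj hb', hfb]; ring
    have e3 : t y a = (1 - f y) ^ 2 := by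
      show gw G' y a * (f y - f a) ^ 2 = (1 - f y) ^ 2
      rw [gw_of_adj ha'.symm, hfa]; ring
    have e4 : t y b = (f y) ^ 2 := by
      show gw G' y b * (f y - f b) ^ 2 = (f y) ^ 2
      rw [gw_of_adj hb'.symm, hfb]; ring
    rw [e1, e2, e3, e4]
    nlinarith [sq_nonneg (2 * f y - 1)]
  have h7 : (S.card : ℝ) ≤ ∑ y ∈ S, (t a y + t b y + (t y a + t y b)) := by
    have := Finset.sum_le_sum h6
    rwa [Finset.sum_const, nsmul_eq_mul, mul_one] at this
  have h8 : ∑ y ∈ S, (t a y + t b y + (t y a + t y b)) =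
      (∑ y ∈ S, t a y) + (∑ y ∈ S, t b y) + (∑ x ∈ S, (t x a + t x b)) := by
    rw [Finset.sum_add_distrib, Finset.sum_add_distrib]
  unfold energy
  have hgsum : ∑ x, ∑ y, gw G' x y * (f x - f y) ^ 2 = ∑ x, g x := rfl
  rw [hgsum]
  rw [hcardS] at h7
  rw [h8] at h7
  linarith

end EffResAux


open EffResAux in
/-- Over all connected graphs on `n` vertices in which the edge `ab` is not a
cut-edge, the increase `R'_{ab} - R_{ab}` of effective resistance upon deleting
the edge `ab` is at least `4/(n(n-2))`, with equality attained by the complete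
graph `K_n`. -/
theorem effRes_increase_min (n : ℕ) (hn : 3 ≤ n) :
    (∀ (V : Type) [Fintype V], Fintype.card V = n →
      ∀ (G : SimpleGraph V), G.Connected → ∀ a b : V, G.Adj a b →
        (G.deleteEdges {s(a, b)}).Connected →
        4 / ((n : ℝ) * ((n : ℝ) - 2))
          ≤ effRes (gw (G.deleteEdges {s(a, b)})) a b - effRes (gw G) a b) ∧
    (∀ a b : Fin n, a ≠ b →
      effRes (gw (((⊤ : SimpleGraph (Fin n))).deleteEdges {s(a, b)})) a b
        - effRes (gw (⊤ : SimpleGraph (Fin n))) a b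
        = 4 / ((n : ℝ) * ((n : ℝ) - 2))) := by
  have hn3 : (3:ℝ) ≤ (n:ℝ) := by exact_mod_cast hn
  constructor
  · intro V _ hcard G hGconn a b hab hG'conn
    classical
    set G' := G.deleteEdges {s(a, b)} with hG'
    have hne : a ≠ b := hab.ne
    set C' := sInf (resSet (gw G') a b) with hC'
    have hpos : (0:ℝ) < C' := csInf_pos hG'conn hne
    have hnadj : ¬ G'.Adj a b := by simp [hG', SimpleGraph.deleteEdges_adj]
    have hle : C' ≤ ((n:ℝ) - 2) / 2 := by
      have hmem : energy (gw G') (fstar a b) ∈ resSet (gw G') a b :=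
        ⟨fstar a b, fstar_a a b, fstar_b hne, rfl⟩
      have h1 := csInf_le (resSet_bddBelow G' a b) hmem
      have h2 := energy_fstar_le G' hne hnadj
      rw [hcard] at h2
      linarith
    have hshift : sInf (resSet (gw G) a b) = C' + 1 := sInf_delete hab
    rw [effRes_eq, effRes_eq, hshift, ← hC']
    have hd1 : (0:ℝ) < C' + 1 := by linarith
    rw [div_sub_div _ _ (ne_of_gt hpos) (ne_of_gt hd1)]
    rw [div_le_div_iff₀ (by nlinarith) (by positivity)]
    have key : C' * (C' + 1) ≤ (((n:ℝ) - 2) / 2) * ((n:ℝ) / 2) :=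
      mul_le_mul hle (by linarith) (by linarith) (by linarith)
    nlinarith [key]
  · intro a b hab
    classical
    have hcard : Fintype.card (Fin n) = n := Fintype.card_fin n
    set G' := (⊤ : SimpleGraph (Fin n)).deleteEdges {s(a, b)} with hG'
    have hadj : (⊤ : SimpleGraph (Fin n)).Adj a b := by simp [hab]
    set C' := sInf (resSet (gw G') a b) with hC'
    have hnadj : ¬ G'.Adj a b := by simp [hG', SimpleGraph.deleteEdges_adj]
    have hle : C' ≤ ((n:ℝ) - 2) / 2 := by
      have hmem : energy (gw G') (fstar a b) ∈ resSet (gw G') a b :=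
        ⟨fstar a b, fstar_a a b, fstar_b hab, rfl⟩
      have h1 := csInf_le (resSet_bddBelow G' a b) hmem
      have h2 := energy_fstar_le G' hab hnadj
      rw [hcard] at h2
      linarith
    have hge : ((n:ℝ) - 2) / 2 ≤ C' := by
      apply le_csInf (resSet_nonempty hab G')
      rintro E ⟨f, hfa, hfb, rfl⟩
      have := lower_bound_complete hab f hfa hfb
      rwa [hcard] at this
    have hC : C' = ((n:ℝ) - 2) / 2 := le_antisymm hle hge
    have hshift : sInf (resSet (gw (⊤ : SimpleGraph (Fin n))) a b) = C' + 1 :=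
      sInf_delete hadj
    rw [effRes_eq, effRes_eq, hshift, ← hC', hC]
    have h2 : ((n:ℝ) - 2) ≠ 0 := by linarith
    have h0 : (n:ℝ) ≠ 0 := by linarith
    field_simp
    ring_nf
    field_simp
    ring
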